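/- Let ε ∈ [0,1) and let N_AD be the qubit amplitude damping channel with Kraus operators A₀ = |0⟩⟨0| + √(1−ε)·|1⟩⟨1| and A₁ = √ε·|0⟩⟨1|, i.e. N_AD(ρ) = A₀ρA₀† + A₁ρA₁†. Let H be the swap operator on ℂ²⊗ℂ², let |Ψ±⟩ = (|01⟩ ± |10⟩)/√2, and define the linear map C on 4×4 complex matrices by C(ρ') = ⟨00|ρ'|00⟩·σ₁ + ⟨Ψ⁺|ρ'|Ψ⁺⟩·σ₁ + ⟨Ψ⁻|ρ'|Ψ⁻⟩·σ₃ + ⟨11|ρ'|11⟩·σ₄, where σ₁ = (1/6)·((1+2ε)·I₄ + (1−4ε)·H), σ₃ = (1/2)·(I₄ − H), σ₄ = (1/6)·(I₄ + H). Then for every density matrix ρ on ℂ², tr[ρ²] = (1/(1−ε)²)·tr[H · C(N_AD(ρ) ⊗ N_AD(ρ))] + ε²/(1−ε)². -/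

import Mathlib

open Matrix BigOperators Kronecker ComplexOrder

/-- Amplitude damping Kraus operator `A₀ = |0⟩⟨0| + √(1−ε)|1⟩⟨1|`. -/
noncomputable def A0 (ε : ℝ) : Matrix (Fin 2) (Fin 2) ℂ :=
  !![1, 0; 0, (Real.sqrt (1 - ε) : ℂ)]

/-- Amplitude damping Kraus operator `A₁ = √ε·|0⟩⟨1|`. -/
noncomputable def A1 (ε : ℝ) : Matrix (Fin 2) (Fin 2) ℂ :=
  !![0, (Real.sqrt ε : ℂ); 0, 0]

/-- The qubit amplitude damping channel `N_AD(ρ) = A₀ρA₀† + A₁ρA₁†`. -/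
noncomputable def NAD (ε : ℝ) (ρ : Matrix (Fin 2) (Fin 2) ℂ) : Matrix (Fin 2) (Fin 2) ℂ :=
  A0 ε * ρ * (A0 ε)ᴴ + A1 ε * ρ * (A1 ε)ᴴ

/-- The swap operator on `ℂ² ⊗ ℂ²`, `H(u⊗v) = v⊗u`. -/
noncomputable def Hswap : Matrix (Fin 2 × Fin 2) (Fin 2 × Fin 2) ℂ :=
  Matrix.of fun p q => if p.1 = q.2 ∧ p.2 = q.1 then 1 else 0

/-- `σ₁ = (1/6)((1+2ε)I₄ + (1−4ε)H)`. -/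
noncomputable def sig1 (ε : ℝ) : Matrix (Fin 2 × Fin 2) (Fin 2 × Fin 2) ℂ :=
  (1 / 6 : ℂ) • (((1 + 2 * ε : ℝ) : ℂ) • (1 : Matrix (Fin 2 × Fin 2) (Fin 2 × Fin 2) ℂ)
    + ((1 - 4 * ε : ℝ) : ℂ) • Hswap)

/-- `σ₃ = (1/2)(I₄ − H)`. -/
noncomputable def sig3 : Matrix (Fin 2 × Fin 2) (Fin 2 × Fin 2) ℂ :=
  (1 / 2 : ℂ) • ((1 : Matrix (Fin 2 × Fin 2) (Fin 2 × Fin 2) ℂ) - Hswap)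

/-- `σ₄ = (1/6)(I₄ + H)`. -/
noncomputable def sig4 : Matrix (Fin 2 × Fin 2) (Fin 2 × Fin 2) ℂ :=
  (1 / 6 : ℂ) • ((1 : Matrix (Fin 2 × Fin 2) (Fin 2 × Fin 2) ℂ) + Hswap)

/-- The amplitude damping retriever
`C(ρ') = ⟨00|ρ'|00⟩σ₁ + ⟨Ψ⁺|ρ'|Ψ⁺⟩σ₁ + ⟨Ψ⁻|ρ'|Ψ⁻⟩σ₃ + ⟨11|ρ'|11⟩σ₄`, where
`|Ψ±⟩ = (|01⟩ ± |10⟩)/√2`. -/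
noncomputable def CAD (ε : ℝ) (ρ' : Matrix (Fin 2 × Fin 2) (Fin 2 × Fin 2) ℂ) :
    Matrix (Fin 2 × Fin 2) (Fin 2 × Fin 2) ℂ :=
  ρ' (0, 0) (0, 0) • sig1 ε
    + ((1 / 2 : ℂ) * (ρ' (0, 1) (0, 1) + ρ' (1, 0) (1, 0)
        + ρ' (0, 1) (1, 0) + ρ' (1, 0) (0, 1))) • sig1 ε
    + ((1 / 2 : ℂ) * (ρ' (0, 1) (0, 1) + ρ' (1, 0) (1, 0)
        - ρ' (0, 1) (1, 0) - ρ' (1, 0) (0, 1))) • sig3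
    + ρ' (1, 1) (1, 1) • sig4

lemma NAD_eq' (ε : ℝ) (hε : 0 ≤ ε) (hε1 : ε < 1) (ρ : Matrix (Fin 2) (Fin 2) ℂ) :
    NAD ε ρ = !![ρ 0 0 + (ε:ℂ) * ρ 1 1, ((Real.sqrt (1-ε):ℝ):ℂ) * ρ 0 1;
                 ((Real.sqrt (1-ε):ℝ):ℂ) * ρ 1 0, (1 - (ε:ℂ)) * ρ 1 1] := by
  have ht : ((Real.sqrt ε : ℝ):ℂ) * ((Real.sqrt ε : ℝ):ℂ) = (ε:ℂ) := by
    norm_cast; exact Real.mul_self_sqrt hε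
  have hs : ((Real.sqrt (1-ε) : ℝ):ℂ) * ((Real.sqrt (1-ε) : ℝ):ℂ) = 1 - (ε:ℂ) := by
    norm_cast
    rw [Real.mul_self_sqrt (by linarith)]
  ext i j
  fin_cases i <;> fin_cases j <;>
    simp [NAD, A0, A1, Matrix.mul_apply, Matrix.vecMul, dotProduct,
      Fin.sum_univ_two, Matrix.conjTranspose_apply,
      Complex.star_def, Complex.conj_ofReal]
  · linear_combination ρ 1 1 * ht
  · linear_combination
  · linear_combination ρ 1 1 * hs

/-- for every `ε ∈ [0,1)` and every density matrix `ρ` on `ℂ²`,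
`tr[ρ²] = (1/(1−ε)²)·tr[H · C(N_AD(ρ) ⊗ N_AD(ρ))] + ε²/(1−ε)²`. -/
theorem secondMoment_retriever_amplitudeDamping (ε : ℝ) (hε : 0 ≤ ε) (hε1 : ε < 1)
    (ρ : Matrix (Fin 2) (Fin 2) ℂ) (hρ : ρ.PosSemidef) (hρ1 : ρ.trace = 1) :
    (ρ ^ 2).trace
      = ((1 / (1 - ε) ^ 2 : ℝ) : ℂ) * (Hswap * CAD ε (NAD ε ρ ⊗ₖ NAD ε ρ)).trace
        + ((ε ^ 2 / (1 - ε) ^ 2 : ℝ) : ℂ) := by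
  have hd : ρ 1 1 = 1 - ρ 0 0 := by
    have h := hρ1
    simp [Matrix.trace, Fin.sum_univ_two] at h
    linear_combination h
  have hq2 : ((Real.sqrt (1-ε):ℝ):ℂ) * ((Real.sqrt (1-ε):ℝ):ℂ) = 1 - (ε:ℂ) := by
    norm_cast
    rw [Real.mul_self_sqrt (by linarith)]
  have hne : (1 : ℂ) - (ε:ℂ) ≠ 0 := by
    intro h
    have : (ε:ℂ) = 1 := by linear_combination -h
    exact absurd (by exact_mod_cast this) (ne_of_lt hε1)
  rw [NAD_eq' ε hε hε1 ρ, hd]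
  generalize hq : ((Real.sqrt (1-ε):ℝ):ℂ) = q at hq2 ⊢
  simp only [CAD, sig1, sig3, sig4, Hswap, Matrix.trace, Matrix.diag_apply, pow_two,
    Fintype.sum_prod_type, Fin.sum_univ_two, Matrix.mul_apply, Matrix.add_apply,
    Matrix.smul_apply, Matrix.kroneckerMap_apply, Matrix.sub_apply, Matrix.one_apply,
    Matrix.of_apply, smul_eq_mul, Matrix.cons_val', Matrix.cons_val_zero,
    Matrix.cons_val_one, Matrix.head_cons, Matrix.head_fin_const, Matrix.empty_val',
    Matrix.cons_val_fin_one, Prod.mk.injEq, and_self, and_true, true_and, and_false, false_and,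
    if_true, if_false]
  rw [hd]
  push_cast
  simp only [and_self, if_false]
  field_simp
  ring_nf
  linear_combination (- 1114512556032 * ρ 0 1 * ρ 1 0 * (1-(ε:ℂ))^3
    + ρ 0 1 * ρ 1 0 * (1114512555984 - 3343537668048 * (ε:ℂ) + 3343537668096 * (ε:ℂ)^2
      - 1114512556032 * (ε:ℂ)^3)) * hq2
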